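/- arXiv:1906.05914 — 2 statements merged into one kernel-verified Lean document; each statement's English description precedes it below -/
import Mathlib

section
/- Let α > 0. Then ∫₀^∞ 8(1+α)²·s^(2α+3)/(1+s^(2(1+α)))² · (1 - s^(2(1+α)))/(1 + s^(2(1+α))) ds = -4π/((1+α)·sin(π/(1+α))). -/
open Real MeasureTheory


lemma betaInt {u v : ℝ} (hu : 0 < u) (hv : 0 < v) :
    IntegrableOn (fun x : ℝ => x ^ (u - 1) * (1 - x) ^ (v - 1)) (Set.Ioo 0 1) := by
  have hc := (Complex.betaIntegral_convergent (u := (u : ℂ)) (v := (v : ℂ))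
    (by simpa using hu) (by simpa using hv)).1
  have hre : IntegrableOn (fun x : ℝ =>
      ((x : ℂ) ^ ((u:ℂ) - 1) * (1 - (x : ℂ)) ^ ((v:ℂ) - 1)).re) (Set.Ioc 0 1) := hc.re
  refine (hre.mono_set Set.Ioo_subset_Ioc_self).congr_fun ?_ measurableSet_Ioo
  intro x hx
  dsimp only
  rw [show ((u:ℂ) - 1) = ((u - 1 : ℝ) : ℂ) by push_cast; ring,
    show ((v:ℂ) - 1) = ((v - 1 : ℝ) : ℂ) by push_cast; ring,
    ← Complex.ofReal_cpow hx.1.le, ← Complex.ofReal_one, ← Complex.ofReal_sub,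
    ← Complex.ofReal_cpow (by linarith [hx.2] : (0:ℝ) ≤ 1 - x), ← Complex.ofReal_mul,
    Complex.ofReal_re]

lemma betaIoo {u v : ℝ} (hu : 0 < u) (hv : 0 < v) :
    ∫ x in Set.Ioo (0:ℝ) 1, x ^ (u - 1) * (1 - x) ^ (v - 1) =
      Real.Gamma u * Real.Gamma v / Real.Gamma (u + v) := by
  have key := Complex.Gamma_mul_Gamma_eq_betaIntegral (s := (u : ℂ)) (t := (v : ℂ))
    (by simpa using hu) (by simpa using hv)
  have hB : Complex.betaIntegral u v =
      ((∫ x in Set.Ioo (0:ℝ) 1, x ^ (u - 1) * (1 - x) ^ (v - 1) : ℝ) : ℂ) := by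
    rw [Complex.betaIntegral, intervalIntegral.integral_of_le zero_le_one,
      MeasureTheory.integral_Ioc_eq_integral_Ioo]
    refine Eq.trans ?_ integral_ofReal
    refine setIntegral_congr_fun measurableSet_Ioo fun x hx => ?_
    rw [show ((u:ℂ) - 1) = ((u - 1 : ℝ) : ℂ) by push_cast; ring,
      show ((v:ℂ) - 1) = ((v - 1 : ℝ) : ℂ) by push_cast; ring,
      ← Complex.ofReal_cpow hx.1.le, ← Complex.ofReal_one, ← Complex.ofReal_sub,
      ← Complex.ofReal_cpow (by linarith [hx.2] : (0:ℝ) ≤ 1 - x), ← Complex.ofReal_mul]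
    rfl
  have hne : Real.Gamma (u + v) ≠ 0 := (Real.Gamma_pos_of_pos (by linarith)).ne'
  have h2 : Real.Gamma u * Real.Gamma v =
      Real.Gamma (u + v) * ∫ x in Set.Ioo (0:ℝ) 1, x ^ (u - 1) * (1 - x) ^ (v - 1) := by
    have := key
    rw [hB, ← Complex.ofReal_add, Complex.Gamma_ofReal, Complex.Gamma_ofReal,
      Complex.Gamma_ofReal] at this
    exact_mod_cast this
  rw [h2, mul_comm, mul_div_assoc, div_self hne, mul_one]

lemma Jval {β : ℝ} (h0 : 0 < β) (h1 : β < 1) :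
    ∫ t in Set.Ioo (0:ℝ) 1, t ^ β * (1 - t) ^ (-β) * (1 - 2 * t)
      = -β ^ 2 * (π / Real.sin (π * β)) := by
  have hb1 : (0:ℝ) < 1 + β := by linarith
  have hb2 : (0:ℝ) < 2 + β := by linarith
  have hb3 : (0:ℝ) < 1 - β := by linarith
  have i1 := betaInt hb1 hb3
  have i2 := betaInt hb2 hb3
  have hcong : ∀ t ∈ Set.Ioo (0:ℝ) 1,
      t ^ β * (1 - t) ^ (-β) * (1 - 2 * t)
        = t ^ (1 + β - 1) * (1 - t) ^ (1 - β - 1)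
          - 2 * (t ^ (2 + β - 1) * (1 - t) ^ (1 - β - 1)) := by
    intro t ht
    have h2 : t ^ (2 + β - 1) = t * t ^ β := by
      rw [show (2 + β - 1) = 1 + β by ring, Real.rpow_add ht.1, Real.rpow_one]
    rw [show (1 + β - 1) = β by ring, show (1 - β - 1) = -β by ring, h2]
    ring
  rw [setIntegral_congr_fun measurableSet_Ioo hcong,
    integral_sub i1 (i2.const_mul 2), MeasureTheory.integral_const_mul, betaIoo hb1 hb3, betaIoo hb2 hb3]
  rw [show (1+β)+(1-β) = (2:ℝ) by ring, show (2+β)+(1-β) = (2:ℝ)+1 by ring,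
    show (1:ℝ)+β = β+1 by ring, show (2:ℝ)+β = (β+1)+1 by ring,
    Real.Gamma_add_one h0.ne', Real.Gamma_add_one (by positivity : (β:ℝ)+1 ≠ 0),
    Real.Gamma_add_one h0.ne', Real.Gamma_add_one two_ne_zero, Real.Gamma_two,
    ← Real.Gamma_mul_Gamma_one_sub β]
  ring


lemma cov {α : ℝ} (hα : 0 < α) :
    ∫ s in Set.Ioi (0:ℝ),
        8 * (1 + α) ^ 2 * s ^ (2 * α + 3) / (1 + s ^ (2 * (1 + α))) ^ 2 *
          ((1 - s ^ (2 * (1 + α))) / (1 + s ^ (2 * (1 + α))))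
      = ∫ t in Set.Ioo (0:ℝ) 1,
          4 * (1 + α) * (t ^ (1/(1+α)) * (1 - t) ^ (-(1/(1+α))) * (1 - 2 * t)) := by
  have h1α : (0:ℝ) < 1 + α := by linarith
  set c : ℝ := 2 * (1 + α) with hc
  have hcpos : 0 < c := by positivity
  set β : ℝ := 1/(1+α) with hβ
  have hβpos : 0 < β := by positivity
  have hcβ : c * β = 2 := by rw [hc, hβ]; field_simp
  set f : ℝ → ℝ := fun x => x ^ c / (1 + x ^ c) with hf
  set F : ℝ → ℝ := fun x => c * x ^ (c - 1) / (1 + x ^ c) ^ 2 with hF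
  set g : ℝ → ℝ := fun t => 4 * (1 + α) * (t ^ β * (1 - t) ^ (-β) * (1 - 2 * t)) with hg
  have hxc : ∀ x : ℝ, 0 < x → 0 < x ^ c := fun x hx => Real.rpow_pos_of_pos hx c
  have hden : ∀ x : ℝ, 0 < x → 0 < 1 + x ^ c := fun x hx => by linarith [hxc x hx]
  have hderiv : ∀ x ∈ Set.Ioi (0:ℝ), HasDerivWithinAt f (F x) (Set.Ioi 0) x := by
    intro x hx
    have hx0 : (0:ℝ) < x := hx
    have d1 : HasDerivAt (fun y : ℝ => y ^ c) (c * x ^ (c - 1)) x :=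
      Real.hasDerivAt_rpow_const (Or.inl hx0.ne')
    have d2 : HasDerivAt (fun y : ℝ => 1 + y ^ c) (c * x ^ (c - 1)) x := d1.const_add 1
    have d3 := d1.div d2 (hden x hx0).ne'
    have heq : (c * x ^ (c - 1) * (1 + x ^ c) - x ^ c * (c * x ^ (c - 1))) / (1 + x ^ c) ^ 2
        = F x := by rw [hF]; field_simp; ring
    rw [heq] at d3
    exact d3.hasDerivWithinAt
  have hinj : Set.InjOn f (Set.Ioi 0) := by
    have hmono : StrictMonoOn f (Set.Ioi 0) := by
      intro x hx y hy hxy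
      have hx0 : (0:ℝ) < x := hx
      have hy0 : (0:ℝ) < y := hy
      have hcc : x ^ c < y ^ c := Real.rpow_lt_rpow hx0.le hxy hcpos
      rw [hf]
      dsimp only
      rw [div_lt_div_iff₀ (hden x hx0) (hden y hy0)]
      nlinarith
    exact hmono.injOn
  have himg : f '' Set.Ioi 0 = Set.Ioo 0 1 := by
    apply Set.eq_of_subset_of_subset
    · rintro _ ⟨x, hx, rfl⟩
      have hx0 : (0:ℝ) < x := hx
      exact ⟨div_pos (hxc x hx0) (hden x hx0),
        (div_lt_one (hden x hx0)).2 (by linarith [hxc x hx0])⟩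
    · rintro t ⟨ht0, ht1⟩
      have h1t : (0:ℝ) < 1 - t := by linarith
      have hq : 0 < t / (1 - t) := div_pos ht0 h1t
      refine ⟨(t / (1 - t)) ^ c⁻¹, Real.rpow_pos_of_pos hq _, ?_⟩
      have hpow : ((t / (1 - t)) ^ c⁻¹) ^ c = t / (1 - t) :=
        Real.rpow_inv_rpow hq.le hcpos.ne'
      rw [hf]
      dsimp only
      rw [hpow]
      field_simp
      ring
  have key := MeasureTheory.integral_image_eq_integral_abs_deriv_smul
    measurableSet_Ioi hderiv hinj g
  rw [himg] at key
  rw [show (∫ t in Set.Ioo (0:ℝ) 1,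
      4 * (1 + α) * (t ^ (1/(1+α)) * (1 - t) ^ (-(1/(1+α))) * (1 - 2 * t)))
      = ∫ t in Set.Ioo (0:ℝ) 1, g t by rfl, key]
  refine setIntegral_congr_fun measurableSet_Ioi fun x hx => ?_
  have hx0 : (0:ℝ) < x := hx
  have hd := hden x hx0
  have hxcp := hxc x hx0
  have hFpos : 0 < F x := by
    rw [hF]
    have := Real.rpow_pos_of_pos hx0 (c - 1)
    positivity
  have e1 : 1 - f x = 1 / (1 + x ^ c) := by rw [hf]; dsimp only; field_simp; ring
  have e2 : f x ^ β = x ^ (c * β) / (1 + x ^ c) ^ β := by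
    rw [hf]
    dsimp only
    rw [Real.div_rpow hxcp.le hd.le, (Real.rpow_mul hx0.le c β).symm]
  have e3 : (1 - f x) ^ (-β) = (1 + x ^ c) ^ β := by
    rw [e1, one_div, Real.inv_rpow hd.le, ← Real.rpow_neg hd.le, neg_neg]
  have e4 : 1 - 2 * f x = (1 - x ^ c) / (1 + x ^ c) := by
    rw [hf]; dsimp only; field_simp; ring
  have ebp : (0:ℝ) < (1 + x ^ c) ^ β := Real.rpow_pos_of_pos hd β
  have ex : x ^ (c - 1) * x ^ (c * β) = x ^ (2 * α + 3) := by
    rw [← Real.rpow_add hx0, hcβ]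
    congr 1
    rw [hc]; ring
  rw [smul_eq_mul, abs_of_pos hFpos, hg, hF]
  dsimp only
  rw [e2, e3, e4]
  field_simp
  rw [hc] at ex ⊢
  rw [show α * 2 + 3 = 2 * α + 3 by ring]
  linear_combination (-8*(1+α)*(1 - x ^ (2*(1+α)))) * ex

theorem stmt_3 (α : ℝ) (hα : 0 < α) :
    ∫ s in Set.Ioi (0 : ℝ),
        8 * (1 + α) ^ 2 * s ^ (2 * α + 3) / (1 + s ^ (2 * (1 + α))) ^ 2 *
          ((1 - s ^ (2 * (1 + α))) / (1 + s ^ (2 * (1 + α)))) =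
      -(4 * Real.pi) / ((1 + α) * Real.sin (Real.pi / (1 + α))) := by
  have h1α : (0:ℝ) < 1 + α := by linarith
  have hβ0 : (0:ℝ) < 1/(1+α) := by positivity
  have hβ1 : 1/(1+α) < 1 := by
    rw [div_lt_one h1α]; linarith
  rw [cov hα, MeasureTheory.integral_const_mul, Jval hβ0 hβ1]
  have hsin : Real.sin (Real.pi / (1+α)) > 0 := by
    apply Real.sin_pos_of_pos_of_lt_pi
    · positivity
    · rw [div_lt_iff₀ h1α]; nlinarith [Real.pi_pos]
  rw [show Real.pi * (1/(1+α)) = Real.pi/(1+α) by ring]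
  field_simp
end

section
/- Let α > -1, l ≥ 1 an integer, and set δ = l/(1+α). Then the functions ξ₁(r) = ((δ+1)·r^l + (δ-1)·r^(2(1+α)+l))/(1 + r^(2(1+α))) and ξ₂(r) = ((δ+1)·r^(2(1+α)-l) + (δ-1)·r^(-l))/(1 + r^(2(1+α))) both satisfy, for all r > 0, the ODE ξ''(r) + ξ'(r)/r + (8(1+α)²·r^(2α)/(1+r^(2(1+α)))² - l²/r²)·ξ(r) = 0. -/
set_option maxHeartbeats 1600000
open Real

lemma two_derivs (a b p q c : ℝ) (r : ℝ) (hr : 0 < r) :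
    deriv (fun y : ℝ => (a * y ^ p + b * y ^ q) / (1 + y ^ c)) r =
      ((a * (p * r ^ (p-1)) + b * (q * r ^ (q-1))) * (1 + r ^ c) -
        (a * r ^ p + b * r ^ q) * (c * r ^ (c-1))) / (1 + r ^ c) ^ 2 ∧
    deriv (deriv (fun y : ℝ => (a * y ^ p + b * y ^ q) / (1 + y ^ c))) r =
      (((a * (p * ((p-1) * r ^ (p-1-1))) + b * (q * ((q-1) * r ^ (q-1-1)))) * (1 + r ^ c) +
          (a * (p * r ^ (p-1)) + b * (q * r ^ (q-1))) * (c * r ^ (c-1)) -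
          ((a * (p * r ^ (p-1)) + b * (q * r ^ (q-1))) * (c * r ^ (c-1)) +
            (a * r ^ p + b * r ^ q) * (c * ((c-1) * r ^ (c-1-1))))) * (1 + r ^ c) ^ 2 -
        ((a * (p * r ^ (p-1)) + b * (q * r ^ (q-1))) * (1 + r ^ c) -
          (a * r ^ p + b * r ^ q) * (c * r ^ (c-1))) * (2 * (1 + r ^ c) * (c * r ^ (c-1)))) /
        ((1 + r ^ c) ^ 2) ^ 2 := by
  have hden : ∀ x : ℝ, 0 < x → (0:ℝ) < 1 + x ^ c := by
    intro x hx; positivity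
  have hf : ∀ x : ℝ, 0 < x → HasDerivAt (fun y : ℝ => (a * y ^ p + b * y ^ q) / (1 + y ^ c))
      (((a * (p * x ^ (p-1)) + b * (q * x ^ (q-1))) * (1 + x ^ c) -
        (a * x ^ p + b * x ^ q) * (c * x ^ (c-1))) / (1 + x ^ c) ^ 2) x := by
    intro x hx
    have hN := ((Real.hasDerivAt_rpow_const (p := p) (Or.inl hx.ne')).const_mul a).add
      ((Real.hasDerivAt_rpow_const (p := q) (Or.inl hx.ne')).const_mul b)
    have hD := (Real.hasDerivAt_rpow_const (p := c) (Or.inl hx.ne')).const_add 1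
    exact hN.div hD (hden x hx).ne'
  constructor
  · exact (hf r hr).deriv
  · have hEq : deriv (fun y : ℝ => (a * y ^ p + b * y ^ q) / (1 + y ^ c)) =ᶠ[nhds r]
        (fun x : ℝ => ((a * (p * x ^ (p-1)) + b * (q * x ^ (q-1))) * (1 + x ^ c) -
          (a * x ^ p + b * x ^ q) * (c * x ^ (c-1))) / (1 + x ^ c) ^ 2) := by
      filter_upwards [isOpen_Ioi.mem_nhds hr] with x hx
      exact (hf x hx).deriv
    rw [hEq.deriv_eq]
    have hN' := (((Real.hasDerivAt_rpow_const (p := p-1) (Or.inl hr.ne')).const_mul p).const_mul a).add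
      (((Real.hasDerivAt_rpow_const (p := q-1) (Or.inl hr.ne')).const_mul q).const_mul b)
    have hN := ((Real.hasDerivAt_rpow_const (p := p) (Or.inl hr.ne')).const_mul a).add
      ((Real.hasDerivAt_rpow_const (p := q) (Or.inl hr.ne')).const_mul b)
    have hD := (Real.hasDerivAt_rpow_const (p := c) (Or.inl hr.ne')).const_add 1
    have hD' := ((Real.hasDerivAt_rpow_const (p := c-1) (Or.inl hr.ne')).const_mul c)
    have hNum := (hN'.mul hD).sub (hN.mul hD')
    have hDen2 := hD.pow 2
    have hg := hNum.div hDen2 (pow_ne_zero 2 (hden r hr).ne')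
    erw [hg.deriv]
    simp only [Pi.add_apply, Pi.sub_apply, Pi.mul_apply, Pi.pow_apply]
    push_cast
    ring

theorem stmt_9 (α : ℝ) (hα : -1 < α) (l : ℕ) (hl : 1 ≤ l) :
    ∀ r : ℝ, 0 < r →
      (deriv (deriv (fun r : ℝ =>
          (((l : ℝ) / (1 + α) + 1) * r ^ (l : ℝ) +
            ((l : ℝ) / (1 + α) - 1) * r ^ (2 * (1 + α) + l)) /
          (1 + r ^ (2 * (1 + α))))) r +
        deriv (fun r : ℝ =>
          (((l : ℝ) / (1 + α) + 1) * r ^ (l : ℝ) +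
            ((l : ℝ) / (1 + α) - 1) * r ^ (2 * (1 + α) + l)) /
          (1 + r ^ (2 * (1 + α)))) r / r +
        (8 * (1 + α) ^ 2 * r ^ (2 * α) / (1 + r ^ (2 * (1 + α))) ^ 2 -
          (l : ℝ) ^ 2 / r ^ 2) *
          ((((l : ℝ) / (1 + α) + 1) * r ^ (l : ℝ) +
            ((l : ℝ) / (1 + α) - 1) * r ^ (2 * (1 + α) + l)) /
          (1 + r ^ (2 * (1 + α)))) = 0) ∧
      (deriv (deriv (fun r : ℝ =>
          (((l : ℝ) / (1 + α) + 1) * r ^ (2 * (1 + α) - l) +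
            ((l : ℝ) / (1 + α) - 1) * r ^ (-(l : ℝ))) /
          (1 + r ^ (2 * (1 + α))))) r +
        deriv (fun r : ℝ =>
          (((l : ℝ) / (1 + α) + 1) * r ^ (2 * (1 + α) - l) +
            ((l : ℝ) / (1 + α) - 1) * r ^ (-(l : ℝ))) /
          (1 + r ^ (2 * (1 + α)))) r / r +
        (8 * (1 + α) ^ 2 * r ^ (2 * α) / (1 + r ^ (2 * (1 + α))) ^ 2 -
          (l : ℝ) ^ 2 / r ^ 2) *
          ((((l : ℝ) / (1 + α) + 1) * r ^ (2 * (1 + α) - l) +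
            ((l : ℝ) / (1 + α) - 1) * r ^ (-(l : ℝ))) /
          (1 + r ^ (2 * (1 + α)))) = 0) := by
  intro r hr
  have h0 : (1:ℝ) + α ≠ 0 := by linarith
  have hrne : r ≠ 0 := hr.ne'
  have hc2 : r ^ (2*(1+α)) = r * r * r ^ (2*α) := by
    rw [show 2*(1+α) = 1 + (1 + 2*α) by ring, Real.rpow_add hr, Real.rpow_add hr, Real.rpow_one]
    ring
  have hB : (0:ℝ) < r ^ (2*α) := Real.rpow_pos_of_pos hr _
  have hX : (0:ℝ) < r ^ (l:ℝ) := Real.rpow_pos_of_pos hr _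
  have hdenpos : (0:ℝ) < 1 + r * r * r ^ (2*α) := by positivity
  constructor
  · obtain ⟨h1, h2⟩ := two_derivs ((l:ℝ)/(1+α)+1) ((l:ℝ)/(1+α)-1) (l:ℝ) (2*(1+α)+(l:ℝ))
      (2*(1+α)) r hr
    rw [h1, h2]
    simp only [Real.rpow_sub hr, Real.rpow_add hr, Real.rpow_one]
    rw [hc2]
    field_simp [hdenpos.ne']
    ring
  · obtain ⟨h1, h2⟩ := two_derivs ((l:ℝ)/(1+α)+1) ((l:ℝ)/(1+α)-1) (2*(1+α)-(l:ℝ)) (-(l:ℝ))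
      (2*(1+α)) r hr
    rw [h1, h2]
    simp only [Real.rpow_sub hr, Real.rpow_add hr, Real.rpow_neg hr.le, Real.rpow_one]
    rw [hc2]
    field_simp [hdenpos.ne']
    ring
end
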